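/- Let R_m = min{rank(A) : A ∈ S} and R_b = min{rank_B(A) : A ∈ S}, where S is the set of unrestricted least-squares minimizers. If R is an integer with R_b ≤ R < R_m, then the rank-constrained least-squares problem inf{F(A) : rank(A) ≤ R} does not attain its infimum (it has no solution). -/

import Mathlib

open scoped BigOperators

noncomputable section

/-- The tensor `∑_{r<R} β_{1,r} ∘ ⋯ ∘ β_{D,r}` built from CP parameters. -/
def cpDecomp {D : ℕ} {p : Fin D → ℕ} (R : ℕ) (β : Fin R → ∀ d : Fin D, Fin (p d) → ℝ) :
    (∀ d : Fin D, Fin (p d)) → ℝ :=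
  fun i => ∑ r : Fin R, ∏ d : Fin D, β r d (i d)

/-- CP rank of an order-`D` tensor. -/
def cpRank {D : ℕ} {p : Fin D → ℕ} (A : (∀ d : Fin D, Fin (p d)) → ℝ) : ℕ :=
  sInf {R : ℕ | ∃ β : Fin R → ∀ d : Fin D, Fin (p d) → ℝ, A = cpDecomp R β}

/-- Frobenius norm of a tensor. -/
def frob {D : ℕ} {p : Fin D → ℕ} (A : (∀ d : Fin D, Fin (p d)) → ℝ) : ℝ :=
  Real.sqrt (∑ i, (A i) ^ 2)

/-- Border rank: the least `R` such that the tensor is a Frobenius-norm limit of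
tensors of CP rank at most `R`. -/
def borderRank {D : ℕ} {p : Fin D → ℕ} (A : (∀ d : Fin D, Fin (p d)) → ℝ) : ℕ :=
  sInf {R : ℕ | ∀ ε : ℝ, 0 < ε → ∃ B : (∀ d : Fin D, Fin (p d)) → ℝ,
    cpRank B ≤ R ∧ frob (A - B) < ε}

/-- Least-squares loss `F(A) = ∑ᵢ (yᵢ - ⟨A, Xᵢ⟩)²`. -/
def lsLoss {D n : ℕ} {p : Fin D → ℕ} (y : Fin n → ℝ)
    (X : Fin n → (∀ d : Fin D, Fin (p d)) → ℝ) (A : (∀ d : Fin D, Fin (p d)) → ℝ) : ℝ :=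
  ∑ i, (y i - ∑ j, A j * X i j) ^ 2

/-- Let `S` be the set of unrestricted least-squares minimizers,
`R_m = min{rank(A) : A ∈ S}` and `R_b = min{rank_B(A) : A ∈ S}`.  If `R_b ≤ R < R_m`,
then the rank-constrained least-squares problem `inf{F(A) : rank(A) ≤ R}` does not
attain its infimum (it has no solution). -/
lemma exists_lsMin {D n : ℕ} {p : Fin D → ℕ} (y : Fin n → ℝ)
    (X : Fin n → (∀ d : Fin D, Fin (p d)) → ℝ) :
    ∃ A : (∀ d : Fin D, Fin (p d)) → ℝ, ∀ B : (∀ d : Fin D, Fin (p d)) → ℝ,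
      lsLoss y X A ≤ lsLoss y X B := by
  classical
  set L : ((∀ d : Fin D, Fin (p d)) → ℝ) →ₗ[ℝ] EuclideanSpace ℝ (Fin n) :=
    { toFun := fun A => WithLp.toLp 2 (fun i => ∑ j, A j * X i j)
      map_add' := by
        intro a b; ext i; simp [add_mul, Finset.sum_add_distrib]
      map_smul' := by
        intro c a; ext i
        simp [Finset.mul_sum, mul_assoc, EuclideanSpace, PiLp, WithLp] }
  set V := LinearMap.range L
  set y' : EuclideanSpace ℝ (Fin n) := WithLp.toLp 2 y
  obtain ⟨A, hA⟩ := (V.orthogonalProjectionOnto y').2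
  refine ⟨A, fun B => ?_⟩
  have key : ‖y' - L A‖ ≤ ‖y' - L B‖ := by
    rw [hA, ← Submodule.starProjection_apply, Submodule.starProjection_minimal]
    exact ciInf_le ⟨0, by rintro _ ⟨w, rfl⟩; positivity⟩ (⟨L B, ⟨B, rfl⟩⟩ : V)
  have h1 : ∀ C : (∀ d : Fin D, Fin (p d)) → ℝ,
      ‖y' - L C‖ ^ 2 = lsLoss y X C := by
    intro C
    rw [EuclideanSpace.norm_eq, Real.sq_sqrt (by positivity)]
    refine Finset.sum_congr rfl fun i _ => ?_
    rw [Real.norm_eq_abs, sq_abs]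
    rfl
  have := pow_le_pow_left₀ (norm_nonneg _) key 2
  rwa [h1 A, h1 B] at this

lemma lsLoss_continuous {D n : ℕ} {p : Fin D → ℕ} (y : Fin n → ℝ)
    (X : Fin n → (∀ d : Fin D, Fin (p d)) → ℝ) :
    Continuous (lsLoss y X) := by
  unfold lsLoss
  exact continuous_finset_sum _ fun i _ => (Continuous.sub continuous_const
    (continuous_finset_sum _ fun j _ => (continuous_apply j).mul continuous_const)).pow 2

lemma dist_le_frob {D : ℕ} {p : Fin D → ℕ} (A B : (∀ d : Fin D, Fin (p d)) → ℝ) :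
    dist B A ≤ frob (A - B) := by
  have h0 : (0:ℝ) ≤ frob (A - B) := Real.sqrt_nonneg _
  rw [dist_pi_le_iff h0]
  intro i
  rw [Real.dist_eq, ← Real.sqrt_sq_eq_abs]
  apply Real.sqrt_le_sqrt
  calc (B i - A i) ^ 2 = ((A - B) i) ^ 2 := by ring_nf; rw [Pi.sub_apply]; ring
    _ ≤ ∑ j, ((A - B) j) ^ 2 :=
      Finset.single_le_sum (f := fun j => ((A - B) j) ^ 2) (fun j _ => sq_nonneg _)
        (Finset.mem_univ i)

theorem stmt1 {D n : ℕ} {p : Fin D → ℕ}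
    (y : Fin n → ℝ) (X : Fin n → (∀ d : Fin D, Fin (p d)) → ℝ)
    (S : Set ((∀ d : Fin D, Fin (p d)) → ℝ))
    (hS : S = {A | ∀ B, lsLoss y X A ≤ lsLoss y X B})
    (Rm Rb R : ℕ)
    (hRm : Rm = sInf {r : ℕ | ∃ A ∈ S, cpRank A = r})
    (hRb : Rb = sInf {r : ℕ | ∃ A ∈ S, borderRank A = r})
    (hR : Rb ≤ R) (hR' : R < Rm) :
    ¬ ∃ A : (∀ d : Fin D, Fin (p d)) → ℝ, cpRank A ≤ R ∧
      ∀ B : (∀ d : Fin D, Fin (p d)) → ℝ, cpRank B ≤ R → lsLoss y X A ≤ lsLoss y X B := by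
  rintro ⟨A, hAr, hAmin⟩
  -- S is nonempty
  obtain ⟨A₀, hA₀⟩ := exists_lsMin y X
  have hA₀S : A₀ ∈ S := by rw [hS]; exact hA₀
  -- get A* ∈ S with borderRank A* = Rb
  have hbne : {r : ℕ | ∃ A ∈ S, borderRank A = r}.Nonempty := ⟨_, A₀, hA₀S, rfl⟩
  obtain ⟨As, hAsS, hAsb⟩ : ∃ A ∈ S, borderRank A = Rb := by
    rw [hRb]; exact Nat.sInf_mem hbne
  -- the border-rank defining set for As is nonempty (contains cpRank As via B = A)
  have hsetne : {R : ℕ | ∀ ε : ℝ, 0 < ε → ∃ B : (∀ d : Fin D, Fin (p d)) → ℝ,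
      cpRank B ≤ R ∧ frob (As - B) < ε}.Nonempty := by
    refine ⟨cpRank As, fun ε hε => ⟨As, le_rfl, ?_⟩⟩
    simpa [frob] using hε
  have hmem := Nat.sInf_mem hsetne
  rw [show sInf _ = borderRank As from rfl, hAsb] at hmem
  -- approximation property at level R
  have happrox : ∀ ε : ℝ, 0 < ε → ∃ B : (∀ d : Fin D, Fin (p d)) → ℝ,
      cpRank B ≤ R ∧ frob (As - B) < ε := by
    intro ε hε
    obtain ⟨B, hB1, hB2⟩ := hmem ε hε
    exact ⟨B, hB1.trans hR, hB2⟩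
  -- lsLoss A ≤ lsLoss As
  have hle : lsLoss y X A ≤ lsLoss y X As := by
    by_contra hlt
    push_neg at hlt
    set δ := lsLoss y X A - lsLoss y X As with hδ
    have hδpos : 0 < δ := sub_pos.mpr hlt
    obtain ⟨η, hη, hcont⟩ := Metric.continuous_iff.mp (lsLoss_continuous y X) As δ hδpos
    obtain ⟨B, hB1, hB2⟩ := happrox η hη
    have hdist : dist B As < η := lt_of_le_of_lt (dist_le_frob As B) hB2
    have h1 : dist (lsLoss y X B) (lsLoss y X As) < δ := hcont B hdist
    have h2 : lsLoss y X B < lsLoss y X A := by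
      have := abs_lt.mp (by rwa [Real.dist_eq] at h1)
      linarith [this.2]
    exact absurd (hAmin B hB1) (not_le.mpr h2)
  -- hence A ∈ S
  have hAS : A ∈ S := by
    rw [hS]
    intro B
    exact hle.trans (by rw [hS] at hAsS; exact hAsS B)
  -- contradiction with rank
  have : Rm ≤ cpRank A := by
    rw [hRm]; exact Nat.sInf_le ⟨A, hAS, rfl⟩
  omega
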